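/- Compound sound commutativity: suppose m and m' commute under Q in A; n and n' commute under Q' in B; m soundly abstracts f in A with A capturing f; m' soundly abstracts f' in A with A capturing f'; n soundly abstracts g in B with B capturing g; and n' soundly abstracts g' in B with B capturing g'. Then the sequences f;g and f';g' commute under P⁺ w.r.t. the equivalence [purv(A * B), ∼_{A*B}] induced by A * B, where P(h) ≡ π_{A*B}(h) = (a, b) ∈ X_A × X_B ∧ Q(a) ∧ Q'(b). -/

import Mathlib

namespace HC

open Classical

universe u v w

/-- A heap: a finite partial map from addresses `L` to values `V`. -/
structure Heap (L : Type u) (V : Type v) where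
  toFun : L → Option V
  fin : {l | toFun l ≠ none}.Finite

variable {L : Type u} {V : Type v}

/-- Domain of a heap. -/
def Heap.dom (h : Heap L V) : Set L := {l | h.toFun l ≠ none}

/-- Disjointness of heaps. -/
def HDisj (h₁ h₂ : Heap L V) : Prop := Disjoint h₁.dom h₂.dom

/-- Union of heaps (left-biased; used on disjoint heaps). -/
def hunion (h₁ h₂ : Heap L V) : Heap L V where
  toFun l := (h₁.toFun l).elim (h₂.toFun l) some
  fin := by
    apply (h₁.fin.union h₂.fin).subset
    intro l hl
    simp only [Set.mem_setOf_eq] at hl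
    rcases hh : h₁.toFun l with _ | v
    · right; simpa [Heap.dom, hh, Option.elim] using hl
    · left; simp [Heap.dom, hh]

/-- `subheap h₁ h₂`: `h₁` is a subheap of `h₂`. -/
def subheap (h₁ h₂ : Heap L V) : Prop := ∃ k, HDisj h₁ k ∧ hunion h₁ k = h₂

/-- `hsub k h'` : the subheap of `k` with domain `dom k \ dom h'`. -/
def hsub (k h' : Heap L V) : Heap L V where
  toFun l := (h'.toFun l).elim (k.toFun l) (fun _ => none)
  fin := by
    apply k.fin.subset
    intro l hl
    simp only [Set.mem_setOf_eq] at hl ⊢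
    rcases hh : h'.toFun l with _ | v
    · simpa [hh, Option.elim] using hl
    · simp [hh, Option.elim] at hl

/-- Extension `Ψ⁺` of a heap predicate: some subheap satisfies `Ψ`. -/
def extPred (Ψ : Heap L V → Prop) (h : Heap L V) : Prop := ∃ h', subheap h' h ∧ Ψ h'

/-! ### Concrete programs -/

/-- Sufficient heaps of a program. -/
def suff (f : Heap L V → Set (Heap L V)) : Set (Heap L V) := {h | f h ≠ ∅}

/-- Footprint of a program. -/
def foot (f : Heap L V → Set (Heap L V)) : Set (Heap L V) :=
  suff f ∪ {h | ∀ h', HDisj h h' → hunion h h' ∉ suff f}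

/-- Local action: a concrete program is a total function `f : H → 𝒫(H)` acting locally. -/
def LocalAction (f : Heap L V → Set (Heap L V)) : Prop :=
  ∀ h, f h ≠ ∅ → ∀ h', HDisj h h' →
    f (hunion h h') ≠ ∅ ∧ ∀ k ∈ f (hunion h h'), subheap h' k

/-- The concrete transformer `f̄`. -/
noncomputable def tbar (f : Heap L V → Set (Heap L V)) (C : Set (Heap L V)) :
    Set (Heap L V) :=
  if C ⊆ suff f then ⋃ h ∈ C, f h else ∅

/-- Sequencing `f;g ≜ ḡ ∘ f`. -/
noncomputable def pseq (f g : Heap L V → Set (Heap L V)) : Heap L V → Set (Heap L V) :=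
  fun h => tbar g (f h)

/-! ### Abstractions and the abstract domain -/

/-- An abstraction is given by its projection `π : H → X + {✗}`, encoded with `Option`
(`none` is `✗`). -/
def Locality (π : Heap L V → Option X) : Prop :=
  ∀ h h', HDisj h h' → (π h).isSome → π (hunion h h') = π h

/-- The purview of an abstraction. -/
def purv (π : Heap L V → Option X) : Set (Heap L V) := {h | (π h).isSome}

/-- The abstract domain `𝒜 = X + {⊥, ✗, ✓, ⊤}`. -/
inductive AbsDom (X : Type w) where
  | bot | cross | check | top
  | val (x : X)

/-- The partial order on the abstract domain. -/
def ale {X : Type w} : AbsDom X → AbsDom X → Prop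
  | .bot, _ => True
  | _, .top => True
  | .cross, .cross => True
  | .check, .check => True
  | .val _, .check => True
  | .val x, .val y => x = y
  | _, _ => False

/-- The projection of a single heap, viewed in the abstract domain. -/
def liftProj (π : Heap L V → Option X) (h : Heap L V) : AbsDom X :=
  (π h).elim .cross .val

/-- Abstraction function `α(C) = ⨆_{h ∈ C} π(h)` (the join computed explicitly). -/
noncomputable def alpha (π : Heap L V → Option X) (C : Set (Heap L V)) : AbsDom X :=
  if C = ∅ then .bot
  else if hx : ∃ x, ∀ h ∈ C, π h = some x then .val hx.choose
  else if ∀ h ∈ C, (π h).isSome then .check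
  else if ∀ h ∈ C, π h = none then .cross
  else .top

/-- Concretization function `γ(x) = {h | π(h) ≤ x}`. -/
def gamma (π : Heap L V → Option X) (x : AbsDom X) : Set (Heap L V) :=
  {h | ale (liftProj π h) x}

/-! ### Observational equivalence and concrete commutativity -/

/-- `[Ψ, ∼]` is an observational equivalence: `∼` is an equivalence relation on `H(Ψ⁺)`. -/
def IsObsEq (Ψ : Heap L V → Prop) (sim : Heap L V → Heap L V → Prop) : Prop :=
  (∀ h, extPred Ψ h → sim h h) ∧
  (∀ h h', extPred Ψ h → extPred Ψ h' → sim h h' → sim h' h) ∧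
  (∀ a b c, extPred Ψ a → extPred Ψ b → extPred Ψ c → sim a b → sim b c → sim a c)

/-- Concrete commutativity of `f` and `g` under precondition `P` w.r.t. `[Ψ, ∼]`. -/
def CommuteUnder (Ψ : Heap L V → Prop) (sim : Heap L V → Heap L V → Prop)
    (f g : Heap L V → Set (Heap L V)) (P : Heap L V → Prop) : Prop :=
  ∀ h, P h → pseq f g h ≠ ∅ ∧ pseq g f h ≠ ∅ ∧
    ∃ h', extPred Ψ h' ∧
      ∀ k, (k ∈ pseq f g h ∨ k ∈ pseq g f h) → extPred Ψ k ∧ sim k h'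

/-- The equivalence relation `∼_A` induced by an abstraction. -/
def simInd (π : Heap L V → Option X) (h h' : Heap L V) : Prop := π h = π h'

/-- The heap predicate "h is in purview", used in the induced observational equivalence. -/
def purvPred (π : Heap L V → Option X) (h : Heap L V) : Prop := (π h).isSome

/-- An abstraction captures an observational equivalence. -/
def CapturesEq (π : Heap L V → Option X) (Ψ : Heap L V → Prop)
    (sim : Heap L V → Heap L V → Prop) : Prop :=
  (∀ h, extPred Ψ h → (π h).isSome) ∧
  (∀ h h', Ψ h → Ψ h' → (π h).isSome → π h = π h' → sim h h')

/-! ### Abstract programs and soundness -/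

/-- The abstract transformer `m̂` of an abstract program `m : X → 𝒜`. -/
def mhat {X : Type w} (m : X → AbsDom X) : AbsDom X → AbsDom X
  | .bot => .bot
  | .val x => m x
  | _ => .top

/-- `m` soundly abstracts `f` in the abstraction with projection `π`. -/
def Sound (π : Heap L V → Option X) (m : X → AbsDom X)
    (f : Heap L V → Set (Heap L V)) : Prop :=
  (∀ (C : Set (Heap L V)) (x : AbsDom X),
      ale (alpha π C) x → ale (alpha π (tbar f C)) (mhat m x)) ∧
  (∀ C : Set (Heap L V), (∃ x, alpha π C = .val x) → alpha π (tbar f C) = .bot →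
      mhat m (alpha π C) = .bot)

/-- Abstract programs `m` and `n` commute under `Q`. -/
def AbsCommute {X : Type w} (m n : X → AbsDom X) (Q : X → Prop) : Prop :=
  ∀ x, Q x → mhat n (m x) = mhat m (n x) ∧ ∃ y, mhat n (m x) = .val y

/-- An abstraction captures a concrete program. -/
def CapturesProg (π : Heap L V → Option X) (f : Heap L V → Set (Heap L V)) : Prop :=
  (purv π ⊆ foot f) ∧
  (∀ h ∈ purv π ∩ suff f, ∃ x, alpha π (f h) = .val x) ∧
  (∀ h ∈ purv π ∩ foot f, ∀ h', HDisj h h' →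
      alpha π ((fun k => hsub k h') '' f (hunion h h')) = alpha π (f h))

/-! ### Conjunction of abstractions and of abstract programs -/

/-- Projection of the conjunction `A * B`. -/
noncomputable def conjProj (πA : Heap L V → Option X) (πB : Heap L V → Option Y) :
    Heap L V → Option (X × Y) := fun h =>
  if hc : ∃ p : Heap L V × Heap L V,
      HDisj p.1 p.2 ∧ hunion p.1 p.2 = h ∧ (πA p.1).isSome ∧ (πB p.2).isSome
    then some ((πA hc.choose.1).get hc.choose_spec.2.2.1,
               (πB hc.choose.2).get hc.choose_spec.2.2.2)
    else none

/-- Forget the specific abstract value (used for the join in a compound domain). -/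
def toFour {X : Type w} {Z : Type*} : AbsDom X → AbsDom Z
  | .bot => .bot
  | .cross => .cross
  | .top => .top
  | _ => .check

/-- Join in the abstract domain (on the elements arising in program conjunction). -/
def djoin {Z : Type*} : AbsDom Z → AbsDom Z → AbsDom Z
  | .bot, b => b
  | a, .bot => a
  | .cross, .cross => .cross
  | .check, .check => .check
  | .check, .val _ => .check
  | .val _, .check => .check
  | .val x, .val _ => .val x
  | _, _ => .top

/-- Conjunction `m * n` of abstract programs. -/
def conjProg {X Y : Type*} (m : X → AbsDom X) (n : Y → AbsDom Y) :
    X × Y → AbsDom (X × Y) := fun p =>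
  match m p.1, n p.2 with
  | .bot, _ => .bot
  | _, .bot => .bot
  | .val a, .val b => .val (a, b)
  | ma, nb => djoin (toFour ma) (toFour nb)

/-! ### Isomorphism of abstractions -/

/-- `φ` induces an isomorphism between the abstractions with projections `πA`, `πB`. -/
def Iso (πA : Heap L V → Option X) (πB : Heap L V → Option Y) (φ : X ≃ Y) : Prop :=
  ∀ h, (πA h).map φ = πB h

/-- Extension of `φ : X → Y` to the abstract domains, fixing `⊥, ✗, ✓, ⊤`. -/
def mapAbs {X Y : Type*} (φ : X → Y) : AbsDom X → AbsDom Y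
  | .bot => .bot
  | .cross => .cross
  | .check => .check
  | .top => .top
  | .val x => .val (φ x)

end HC

open HC

section Aux

open Classical

universe u v w

variable {L : Type u} {V : Type v} {X : Type w} {Y : Type*}

theorem Heap.ext' {h₁ h₂ : Heap L V} (h : h₁.toFun = h₂.toFun) : h₁ = h₂ := by
  cases h₁; cases h₂; simpa using h

theorem hdisj_iff {h₁ h₂ : Heap L V} :
    HDisj h₁ h₂ ↔ ∀ l, h₁.toFun l = none ∨ h₂.toFun l = none := by
  constructor
  · intro hd l
    by_cases h1 : h₁.toFun l = none
    · exact Or.inl h1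
    · right
      by_contra h2
      exact Set.disjoint_left.mp hd h1 h2
  · intro h
    rw [HDisj, Set.disjoint_left]
    intro l hl1 hl2
    rcases h l with h' | h'
    · exact hl1 h'
    · exact hl2 h'

theorem hdisj_symm {a b : Heap L V} (h : HDisj a b) : HDisj b a := Disjoint.symm h

theorem hunion_comm {a b : Heap L V} (hd : HDisj a b) : hunion a b = hunion b a := by
  apply Heap.ext'; funext l
  rcases hdisj_iff.mp hd l with h | h
  · cases h2 : b.toFun l <;> simp [hunion, h, h2]
  · cases h2 : a.toFun l <;> simp [hunion, h, h2]

theorem hunion_assoc (a b c : Heap L V) :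
    hunion (hunion a b) c = hunion a (hunion b c) := by
  apply Heap.ext'; funext l
  cases h1 : a.toFun l <;> cases h2 : b.toFun l <;> simp [hunion, h1, h2]

theorem dom_hunion (a b : Heap L V) : (hunion a b).dom = a.dom ∪ b.dom := by
  ext l
  simp only [Heap.dom, hunion, Set.mem_setOf_eq, Set.mem_union]
  cases h : a.toFun l <;> simp [h]

theorem hdisj_hunion_right {a b c : Heap L V} :
    HDisj a (hunion b c) ↔ HDisj a b ∧ HDisj a c := by
  simp [HDisj, dom_hunion, Set.disjoint_union_right]

theorem hdisj_hunion_left {a b c : Heap L V} :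
    HDisj (hunion a b) c ↔ HDisj a c ∧ HDisj b c := by
  simp [HDisj, dom_hunion, Set.disjoint_union_left]

/-- The empty heap. -/
def hempty : Heap L V := ⟨fun _ => none, by simp⟩

theorem hunion_hempty (h : Heap L V) : hunion h hempty = h := by
  apply Heap.ext'; funext l
  cases h2 : h.toFun l <;> simp [hunion, hempty, h2]

theorem hdisj_hempty (h : Heap L V) : HDisj h hempty := by
  have : (hempty : Heap L V).dom = ∅ := by
    ext l; simp [Heap.dom, hempty]
  rw [HDisj, this]
  exact Set.disjoint_empty _

theorem subheap_refl (h : Heap L V) : subheap h h :=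
  ⟨hempty, hdisj_hempty h, hunion_hempty h⟩

theorem hsub_hunion {a b : Heap L V} (hd : HDisj a b) : hsub (hunion a b) a = b := by
  apply Heap.ext'; funext l
  cases h : a.toFun l with
  | none => simp [hsub, hunion, h]
  | some v =>
    rcases hdisj_iff.mp hd l with h' | h'
    · rw [h] at h'; cases h'
    · simp [hsub, h, h']

/-! ### alpha / tbar / ale / mhat lemmas -/

theorem alpha_empty (π : Heap L V → Option X) : alpha π (∅ : Set (Heap L V)) = .bot := by
  unfold alpha; rw [if_pos rfl]

theorem alpha_val_of {π : Heap L V → Option X} {C : Set (Heap L V)} {x : X}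
    (hne : C ≠ ∅) (hall : ∀ h ∈ C, π h = some x) : alpha π C = .val x := by
  have hex : ∃ x', ∀ h ∈ C, π h = some x' := ⟨x, hall⟩
  unfold alpha
  rw [if_neg hne, dif_pos hex]
  obtain ⟨h, hh⟩ := Set.nonempty_iff_ne_empty.mpr hne
  have h1 := hex.choose_spec h hh
  have h2 := hall h hh
  rw [h1] at h2
  exact congrArg AbsDom.val (Option.some.inj h2)

theorem alpha_singleton {π : Heap L V → Option X} {h : Heap L V} {x : X}
    (hx : π h = some x) : alpha π {h} = .val x :=
  alpha_val_of (Set.singleton_ne_empty h) (by intro k hk; rw [Set.mem_singleton_iff] at hk; rw [hk, hx])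

theorem alpha_eq_val {π : Heap L V → Option X} {C : Set (Heap L V)} {x : X}
    (h : alpha π C = .val x) : C ≠ ∅ ∧ ∀ k ∈ C, π k = some x := by
  unfold alpha at h
  by_cases h1 : C = ∅
  · rw [if_pos h1] at h; exact absurd h (by simp)
  rw [if_neg h1] at h
  by_cases h2 : ∃ x', ∀ k ∈ C, π k = some x'
  · rw [dif_pos h2] at h
    refine ⟨h1, fun k hk => ?_⟩
    rw [h2.choose_spec k hk]
    exact congrArg some (AbsDom.val.inj h)
  · rw [dif_neg h2] at h
    split_ifs at h <;> exact absurd h (by simp)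

theorem eq_of_ale_val {z : AbsDom X} {y : X} (h : ale z (.val y)) :
    z = .bot ∨ z = .val y := by
  cases z with
  | bot => exact Or.inl rfl
  | cross => exact absurd h (by intro hh; exact hh)
  | check => exact absurd h (by intro hh; exact hh)
  | top => exact absurd h (by intro hh; exact hh)
  | val x => exact Or.inr (by rw [show x = y from h])

theorem tbar_of_subset {f : Heap L V → Set (Heap L V)} {C : Set (Heap L V)}
    (h : C ⊆ suff f) : tbar f C = ⋃ k ∈ C, f k := by
  unfold tbar; rw [if_pos h]

theorem tbar_singleton {f : Heap L V → Set (Heap L V)} {k : Heap L V} (h : f k ≠ ∅) :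
    tbar f {k} = f k := by
  rw [tbar_of_subset (by intro a ha; rw [Set.mem_singleton_iff] at ha; subst ha; exact h)]
  simp

theorem mhat_val (m : X → AbsDom X) (x : X) : mhat m (.val x) = m x := rfl

/-! ### AbsCommute extraction -/

theorem absCommute_vals {m m' : X → AbsDom X} {Q : X → Prop} (h : AbsCommute m m' Q)
    {x : X} (hx : Q x) :
    ∃ x₂ x₂' y, m x = .val x₂ ∧ m' x = .val x₂' ∧ m' x₂ = .val y ∧ m x₂' = .val y := by
  obtain ⟨heq, y, hy⟩ := h x hx
  cases hmx : m x with
  | val x₂ =>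
    rw [hmx] at hy heq
    rw [mhat_val] at hy
    cases hmx' : m' x with
    | val x₂' =>
      rw [hmx'] at heq
      rw [mhat_val, mhat_val] at heq
      exact ⟨x₂, x₂', y, rfl, rfl, hy, by rw [← heq]; exact hy⟩
    | bot => rw [hmx', mhat_val] at heq; rw [heq] at hy; exact absurd hy (by simp [mhat])
    | cross => rw [hmx', mhat_val] at heq; rw [heq] at hy; exact absurd hy (by simp [mhat])
    | check => rw [hmx', mhat_val] at heq; rw [heq] at hy; exact absurd hy (by simp [mhat])
    | top => rw [hmx', mhat_val] at heq; rw [heq] at hy; exact absurd hy (by simp [mhat])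
  | bot => rw [hmx] at hy; exact absurd hy (by simp [mhat])
  | cross => rw [hmx] at hy; exact absurd hy (by simp [mhat])
  | check => rw [hmx] at hy; exact absurd hy (by simp [mhat])
  | top => rw [hmx] at hy; exact absurd hy (by simp [mhat])

/-! ### conjProj lemmas -/

theorem conjProj_some_elim {πA : Heap L V → Option X} {πB : Heap L V → Option Y}
    {h : Heap L V} {a : X} {b : Y}
    (hab : conjProj πA πB h = some (a, b)) :
    ∃ p q, HDisj p q ∧ hunion p q = h ∧ πA p = some a ∧ πB q = some b := by
  unfold conjProj at hab
  split_ifs at hab with hc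
  · obtain ⟨hd, hu, hsa, hsb⟩ := hc.choose_spec
    simp only [Option.some.injEq, Prod.mk.injEq] at hab
    refine ⟨hc.choose.1, hc.choose.2, hd, hu, ?_, ?_⟩
    · rw [← hab.1]; exact (Option.some_get hsa).symm
    · rw [← hab.2]; exact (Option.some_get hsb).symm

theorem conjProj_of_decomp {πA : Heap L V → Option X} {πB : Heap L V → Option Y}
    (hA : Locality πA) (hB : Locality πB) {p q : Heap L V} {a : X} {b : Y}
    (hd : HDisj p q) (hpa : πA p = some a) (hqb : πB q = some b) :
    conjProj πA πB (hunion p q) = some (a, b) := by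
  have hc : ∃ pr : Heap L V × Heap L V, HDisj pr.1 pr.2 ∧ hunion pr.1 pr.2 = hunion p q ∧
      (πA pr.1).isSome ∧ (πB pr.2).isSome :=
    ⟨(p, q), hd, rfl, by simp [hpa], by simp [hqb]⟩
  unfold conjProj
  rw [dif_pos hc]
  obtain ⟨hd', hu', hsa, hsb⟩ := hc.choose_spec
  have h1 : πA hc.choose.1 = some a := by
    have e1 : πA (hunion hc.choose.1 hc.choose.2) = πA hc.choose.1 := hA _ _ hd' hsa
    have e2 : πA (hunion p q) = πA p := hA _ _ hd (by simp [hpa])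
    rw [← e1, hu', e2, hpa]
  have h2 : πB hc.choose.2 = some b := by
    have e1 : πB (hunion hc.choose.2 hc.choose.1) = πB hc.choose.2 :=
      hB _ _ (hdisj_symm hd') hsb
    have e2 : πB (hunion q p) = πB q := hB _ _ (hdisj_symm hd) (by simp [hqb])
    calc πB hc.choose.2 = πB (hunion hc.choose.2 hc.choose.1) := e1.symm
      _ = πB (hunion hc.choose.1 hc.choose.2) := by rw [hunion_comm (hdisj_symm hd')]
      _ = πB (hunion q p) := by rw [hu', hunion_comm hd]
      _ = πB q := e2
      _ = some b := hqb
  have ga : ∀ (hs : (πA hc.choose.1).isSome), (πA hc.choose.1).get hs = a := by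
    intro hs; rw [← Option.some_inj, Option.some_get, h1]
  have gb : ∀ (hs : (πB hc.choose.2).isSome), (πB hc.choose.2).get hs = b := by
    intro hs; rw [← Option.some_inj, Option.some_get, h2]
  rw [ga, gb]

/-! ### The key step lemma -/

theorem step_lemma {π : Heap L V → Option X} {m : X → AbsDom X}
    {f : Heap L V → Set (Heap L V)}
    (hla : LocalAction f) (hs : Sound π m f) (hc : CapturesProg π f)
    {h₀ rest : Heap L V} {x x' : X} (hx : π h₀ = some x) (hm : m x = .val x')
    (hd : HDisj h₀ rest) :
    f (hunion h₀ rest) ≠ ∅ ∧ ∀ k ∈ f (hunion h₀ rest),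
      ∃ k₀, HDisj k₀ rest ∧ hunion k₀ rest = k ∧ π k₀ = some x' := by
  have hpurv : h₀ ∈ purv π := by simp [purv, hx]
  have hfoot : h₀ ∈ foot f := hc.1 hpurv
  have halpha1 : alpha π {h₀} = .val x := alpha_singleton hx
  have hne0 : f h₀ ≠ ∅ := by
    intro hemp
    have hsb : ¬ ({h₀} : Set (Heap L V)) ⊆ suff f := by
      intro hsb
      exact (hsb (Set.mem_singleton h₀) : f h₀ ≠ ∅) hemp
    have ht : tbar f {h₀} = ∅ := by unfold tbar; rw [if_neg hsb]
    have hbot := hs.2 {h₀} ⟨x, halpha1⟩ (by rw [ht, alpha_empty])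
    rw [halpha1, mhat_val, hm] at hbot
    cases hbot
  have hsuff : h₀ ∈ suff f := hne0
  obtain ⟨x'', hx''⟩ := hc.2.1 h₀ ⟨hpurv, hsuff⟩
  have hle := hs.1 {h₀} (.val x) (by rw [halpha1]; rfl)
  rw [tbar_singleton hne0, mhat_val, hm, hx''] at hle
  have hxx : x'' = x' := hle
  subst hxx
  have hcap3 := hc.2.2 h₀ ⟨hpurv, hfoot⟩ rest hd
  rw [hx''] at hcap3
  obtain ⟨hne2, hloc⟩ := hla h₀ hne0 rest hd
  refine ⟨hne2, ?_⟩
  intro k hk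
  obtain ⟨j, hdj, hju⟩ := hloc k hk
  have hjk : hsub k rest = j := by rw [← hju]; exact hsub_hunion hdj
  have hπj : π (hsub k rest) = some x'' :=
    (alpha_eq_val hcap3).2 (hsub k rest) ⟨k, hk, rfl⟩
  refine ⟨j, hdisj_symm hdj, ?_, ?_⟩
  · rw [hunion_comm (hdisj_symm hdj)]; exact hju
  · rw [← hjk]; exact hπj

/-! ### The round lemma: one `pseq f g` round preserves the shape -/

theorem round_lemma {πA : Heap L V → Option X} {πB : Heap L V → Option Y}
    {f g : Heap L V → Set (Heap L V)} {m : X → AbsDom X} {n : Y → AbsDom Y}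
    (hf : LocalAction f) (hg : LocalAction g)
    (hsm : Sound πA m f) (hcf : CapturesProg πA f)
    (hsn : Sound πB n g) (hcg : CapturesProg πB g)
    {p q r : Heap L V} {x x' : X} {y y' : Y}
    (hp : πA p = some x) (hq : πB q = some y)
    (hm : m x = .val x') (hn : n y = .val y')
    (dpq : HDisj p q) (dpr : HDisj p r) (dqr : HDisj q r) :
    pseq f g (hunion p (hunion q r)) ≠ ∅ ∧
    ∀ l ∈ pseq f g (hunion p (hunion q r)),
      ∃ p' q', HDisj p' q' ∧ HDisj p' r ∧ HDisj q' r ∧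
        l = hunion p' (hunion q' r) ∧ πA p' = some x' ∧ πB q' = some y' := by
  have dp : HDisj p (hunion q r) := hdisj_hunion_right.mpr ⟨dpq, dpr⟩
  obtain ⟨hfne, hfall⟩ := step_lemma hf hsm hcf hp hm dp
  have key : ∀ k ∈ f (hunion p (hunion q r)), g k ≠ ∅ ∧
      ∀ l ∈ g k, ∃ p' q', HDisj p' q' ∧ HDisj p' r ∧ HDisj q' r ∧
        l = hunion p' (hunion q' r) ∧ πA p' = some x' ∧ πB q' = some y' := by
    intro k hk
    obtain ⟨kA, hdkA, hkeq, hπkA⟩ := hfall k hk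
    obtain ⟨dkq, dkr⟩ := hdisj_hunion_right.mp hdkA
    have hk2 : k = hunion q (hunion kA r) := by
      rw [← hkeq, ← hunion_assoc, hunion_comm dkq, hunion_assoc]
    have dq2 : HDisj q (hunion kA r) := hdisj_hunion_right.mpr ⟨hdisj_symm dkq, dqr⟩
    obtain ⟨hgne, hgall⟩ := step_lemma hg hsn hcg hq hn dq2
    rw [← hk2] at hgne hgall
    refine ⟨hgne, ?_⟩
    intro l hl
    obtain ⟨lB, hdlB, hleq, hπlB⟩ := hgall l hl
    obtain ⟨dlk, dlr⟩ := hdisj_hunion_right.mp hdlB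
    refine ⟨kA, lB, hdisj_symm dlk, dkr, dlr, ?_, hπkA, hπlB⟩
    rw [← hleq, ← hunion_assoc, hunion_comm dlk, hunion_assoc]
  have hsuffg : f (hunion p (hunion q r)) ⊆ suff g := fun k hk => (key k hk).1
  have htb : pseq f g (hunion p (hunion q r)) = ⋃ k ∈ f (hunion p (hunion q r)), g k :=
    tbar_of_subset hsuffg
  constructor
  · rw [htb]
    obtain ⟨k, hk⟩ := Set.nonempty_iff_ne_empty.mpr hfne
    obtain ⟨l, hl⟩ := Set.nonempty_iff_ne_empty.mpr (key k hk).1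
    exact Set.nonempty_iff_ne_empty.mp ⟨l, Set.mem_biUnion hk hl⟩
  · rw [htb]
    intro l hl
    obtain ⟨k, hk, hl'⟩ := Set.mem_iUnion₂.mp hl
    exact (key k hk).2 l hl'

end Aux

/-- compound sound commutativity. -/
theorem compound_sound_commutativity {L V X Y : Type} [Countable L] [Infinite L]
    (πA : Heap L V → Option X) (πB : Heap L V → Option Y)
    (hA : Locality πA) (hB : Locality πB)
    (f f' g g' : Heap L V → Set (Heap L V))
    (hf : LocalAction f) (hf' : LocalAction f')
    (hg : LocalAction g) (hg' : LocalAction g')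
    (m m' : X → AbsDom X) (n n' : Y → AbsDom Y)
    (Q : X → Prop) (Q' : Y → Prop)
    (hmm : AbsCommute m m' Q) (hnn : AbsCommute n n' Q')
    (hsm : Sound πA m f) (hcf : CapturesProg πA f)
    (hsm' : Sound πA m' f') (hcf' : CapturesProg πA f')
    (hsn : Sound πB n g) (hcg : CapturesProg πB g)
    (hsn' : Sound πB n' g') (hcg' : CapturesProg πB g') :
    CommuteUnder (purvPred (conjProj πA πB)) (simInd (conjProj πA πB))
      (pseq f g) (pseq f' g')
      (extPred (fun h => ∃ a b, conjProj πA πB h = some (a, b) ∧ Q a ∧ Q' b)) := by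
  intro h hP
  obtain ⟨h₀, ⟨r, hdr, hur⟩, ⟨a, b, hab, hQa, hQb⟩⟩ := hP
  obtain ⟨h₁, h₂, d12, h12, hπ1, hπ2⟩ := conjProj_some_elim hab
  have hdr' : HDisj (hunion h₁ h₂) r := by rw [h12]; exact hdr
  obtain ⟨d1r, d2r⟩ := hdisj_hunion_left.mp hdr'
  have hh : h = hunion h₁ (hunion h₂ r) := by rw [← hur, ← h12, hunion_assoc]
  obtain ⟨a₂, a₂', wA, hma, hm'a, hm'a₂, hma₂'⟩ := absCommute_vals hmm hQa
  obtain ⟨b₂, b₂', wB, hnb, hn'b, hn'b₂, hnb₂'⟩ := absCommute_vals hnn hQb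
  -- first round, order f;g
  obtain ⟨hne1, hall1⟩ :=
    round_lemma hf hg hsm hcf hsn hcg hπ1 hπ2 hma hnb d12 d1r d2r
  rw [← hh] at hne1 hall1
  -- first round, order f';g'
  obtain ⟨hne1', hall1'⟩ :=
    round_lemma hf' hg' hsm' hcf' hsn' hcg' hπ1 hπ2 hm'a hn'b d12 d1r d2r
  rw [← hh] at hne1' hall1'
  -- second round after f;g : f';g'
  have hstep2 : ∀ l ∈ pseq f g h, pseq f' g' l ≠ ∅ ∧ ∀ k ∈ pseq f' g' l,
      ∃ p' q', HDisj p' q' ∧ HDisj p' r ∧ HDisj q' r ∧ k = hunion p' (hunion q' r) ∧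
        πA p' = some wA ∧ πB q' = some wB := by
    intro l hl
    obtain ⟨p', q', d1, d2, d3, heq, hπp, hπq⟩ := hall1 l hl
    obtain ⟨hne2, hall2⟩ :=
      round_lemma hf' hg' hsm' hcf' hsn' hcg' hπp hπq hm'a₂ hn'b₂ d1 d2 d3
    rw [← heq] at hne2 hall2
    exact ⟨hne2, hall2⟩
  -- second round after f';g' : f;g
  have hstep2' : ∀ l ∈ pseq f' g' h, pseq f g l ≠ ∅ ∧ ∀ k ∈ pseq f g l,
      ∃ p' q', HDisj p' q' ∧ HDisj p' r ∧ HDisj q' r ∧ k = hunion p' (hunion q' r) ∧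
        πA p' = some wA ∧ πB q' = some wB := by
    intro l hl
    obtain ⟨p', q', d1, d2, d3, heq, hπp, hπq⟩ := hall1' l hl
    obtain ⟨hne2, hall2⟩ :=
      round_lemma hf hg hsm hcf hsn hcg hπp hπq hma₂' hnb₂' d1 d2 d3
    rw [← heq] at hne2 hall2
    exact ⟨hne2, hall2⟩
  -- outer composites as unions
  have hsub1 : pseq f g h ⊆ suff (pseq f' g') := fun l hl => (hstep2 l hl).1
  have hsub1' : pseq f' g' h ⊆ suff (pseq f g) := fun l hl => (hstep2' l hl).1
  have ht1 : pseq (pseq f g) (pseq f' g') h = ⋃ l ∈ pseq f g h, pseq f' g' l :=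
    tbar_of_subset hsub1
  have ht1' : pseq (pseq f' g') (pseq f g) h = ⋃ l ∈ pseq f' g' h, pseq f g l :=
    tbar_of_subset hsub1'
  -- every outcome of either composite projects to (wA, wB)
  have hshape : ∀ k, (k ∈ pseq (pseq f g) (pseq f' g') h ∨
      k ∈ pseq (pseq f' g') (pseq f g) h) →
      conjProj πA πB k = some (wA, wB) := by
    intro k hk
    have hex : ∃ p' q', HDisj p' q' ∧ HDisj p' r ∧ HDisj q' r ∧
        k = hunion p' (hunion q' r) ∧ πA p' = some wA ∧ πB q' = some wB := by
      rcases hk with hk | hk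
      · rw [ht1] at hk
        obtain ⟨l, hl, hk⟩ := Set.mem_iUnion₂.mp hk
        exact (hstep2 l hl).2 k hk
      · rw [ht1'] at hk
        obtain ⟨l, hl, hk⟩ := Set.mem_iUnion₂.mp hk
        exact (hstep2' l hl).2 k hk
    obtain ⟨p', q', d1, d2, d3, heq, hπp, hπq⟩ := hex
    have hπpr : πA (hunion p' r) = some wA := by
      rw [hA p' r d2 (by simp [hπp]), hπp]
    have hd' : HDisj (hunion p' r) q' := hdisj_hunion_left.mpr ⟨d1, hdisj_symm d3⟩
    have hk2 : k = hunion (hunion p' r) q' := by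
      rw [heq, hunion_assoc, hunion_comm d3]
    rw [hk2]
    exact conjProj_of_decomp hA hB hd' hπpr hπq
  -- nonemptiness of the two composites
  have hne_fg : pseq (pseq f g) (pseq f' g') h ≠ ∅ := by
    rw [ht1]
    obtain ⟨l, hl⟩ := Set.nonempty_iff_ne_empty.mpr hne1
    obtain ⟨k, hk⟩ := Set.nonempty_iff_ne_empty.mpr (hstep2 l hl).1
    exact Set.nonempty_iff_ne_empty.mp ⟨k, Set.mem_biUnion hl hk⟩
  have hne_gf : pseq (pseq f' g') (pseq f g) h ≠ ∅ := by
    rw [ht1']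
    obtain ⟨l, hl⟩ := Set.nonempty_iff_ne_empty.mpr hne1'
    obtain ⟨k, hk⟩ := Set.nonempty_iff_ne_empty.mpr (hstep2' l hl).1
    exact Set.nonempty_iff_ne_empty.mp ⟨k, Set.mem_biUnion hl hk⟩
  refine ⟨hne_fg, hne_gf, ?_⟩
  obtain ⟨k₀, hk₀⟩ := Set.nonempty_iff_ne_empty.mpr hne_fg
  have hc₀ := hshape k₀ (Or.inl hk₀)
  refine ⟨k₀, ⟨k₀, subheap_refl k₀, by simp [purvPred, hc₀]⟩, ?_⟩
  intro k hk
  have hck := hshape k hk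
  refine ⟨⟨k, subheap_refl k, by simp [purvPred, hck]⟩, ?_⟩
  show conjProj πA πB k = conjProj πA πB k₀
  rw [hck, hc₀]
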